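/- Let H be a finite index set equipped with a total order ≺, and let G be a complex matrix of size |H| that is strictly lower-triangular with respect to ≺, i.e. G_{ij} = 0 whenever i ⪯ j. Let (v_i(w))_{i∈H} be the unique family of power series with zero constant term satisfying v_i(w) = w_i ∏_{j∈H} (1 − v_j(w))^{G_{ij}}. Then for every ν ∈ ℂ^H, ∏_{i∈H} (1 − v_i(w))^{ν_i − 1} = K^ν_{I,G}(w) as formal power series. -/

import Mathlib

noncomputable def binomC (a : ℂ) (b : ℕ) : ℂ :=
  (∏ j ∈ Finset.range b, (a - (j : ℂ))) / (Nat.factorial b : ℂ)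

noncomputable def cpow {σ : Type*} (f : MvPowerSeries σ ℂ) (α : ℂ) : MvPowerSeries σ ℂ :=
  fun N => ∑ k ∈ Finset.range (N.sum (fun _ e => e) + 1),
    binomC α k * MvPowerSeries.coeff N ((f - 1) ^ k)

/-- `P_i(D,G;ν,N) = -Σ_j ν_j (D⁻¹)_{ji} - Σ_j N_j (G D⁻¹)_{ji}`. -/
noncomputable def Pfin {H : Type*} [Fintype H] [DecidableEq H]
    (D G : Matrix H H ℂ) (ν : H → ℂ) (N : H →₀ ℕ) (i : H) : ℂ :=
  -(∑ j, ν j * D⁻¹ j i) - ∑ j, (N j : ℂ) * (G * D⁻¹) j i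

/-- The power series `K^ν_{D,G}(w) = Σ_N (∏_{i∈H(N)} binom(P_i+N_i, N_i)) w^N`. -/
noncomputable def Kfin {H : Type*} [Fintype H] [DecidableEq H]
    (D G : Matrix H H ℂ) (ν : H → ℂ) : MvPowerSeries H ℂ :=
  fun N => ∏ i ∈ N.support, binomC (Pfin D G ν N i + (N i : ℂ)) (N i)

/-- `F_{ij}(D,G;ν,N) = δ_{ij} P_j + (G D⁻¹)_{ij} N_j`. -/
noncomputable def Ffin {H : Type*} [Fintype H] [DecidableEq H]
    (D G : Matrix H H ℂ) (ν : H → ℂ) (N : H →₀ ℕ) (i j : H) : ℂ :=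
  (if i = j then Pfin D G ν N j else 0) + (G * D⁻¹) i j * (N j : ℂ)

/-- The power series
`R^ν_{D,G}(w) = Σ_N (det_{H(N)} F) (∏_{i∈H(N)} (1/N_i) binom(P_i+N_i-1, N_i-1)) w^N`. -/
noncomputable def Rfin {H : Type*} [Fintype H] [DecidableEq H]
    (D G : Matrix H H ℂ) (ν : H → ℂ) : MvPowerSeries H ℂ :=
  fun N =>
    (Matrix.det (Matrix.of fun i j : N.support => Ffin D G ν N i j)) *
      ∏ i ∈ N.support, (1 / (N i : ℂ)) * binomC (Pfin D G ν N i + (N i : ℂ) - 1) (N i - 1)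

lemma descPochhammer_smeval_complex (a : ℂ) (n : ℕ) :
    (descPochhammer ℤ n).smeval a = ∏ j ∈ Finset.range n, (a - (j : ℂ)) := by
  induction n with
  | zero => simp [descPochhammer_zero, Polynomial.smeval_one]
  | succ n ih =>
      rw [descPochhammer_succ_right, Polynomial.smeval_mul, ih, Finset.prod_range_succ,
        Polynomial.smeval_sub, Polynomial.smeval_X, Polynomial.smeval_natCast]
      simp [pow_one]

lemma binomC_eq_choose (a : ℂ) (b : ℕ) : binomC a b = Ring.choose a b := by
  have h := Ring.descPochhammer_eq_factorial_smul_choose a b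
  rw [descPochhammer_smeval_complex] at h
  rw [binomC, h, nsmul_eq_mul]
  field_simp [Nat.factorial_ne_zero]

lemma binomC_zero_right (a : ℂ) : binomC a 0 = 1 := by simp [binomC]

lemma binomC_zero_left {k : ℕ} (hk : k ≠ 0) : binomC 0 k = 0 := by
  rw [binomC]
  rw [Finset.prod_eq_zero (Finset.mem_range.mpr (Nat.pos_of_ne_zero hk)) (by simp)]
  simp

lemma binomC_vandermonde (α β : ℂ) (n : ℕ) :
    binomC (α + β) n = ∑ ij ∈ Finset.HasAntidiagonal.antidiagonal n, binomC α ij.1 * binomC β ij.2 := by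
  simp only [binomC_eq_choose]
  exact Ring.add_choose_eq n (mul_comm α β)

lemma binomC_reflect (ν : ℂ) (n : ℕ) :
    binomC (-ν + (n : ℂ)) n = (-1) ^ n * binomC (ν - 1) n := by
  rw [binomC, binomC, ← mul_div_assoc]
  congr 1
  have h1 : ∀ j ∈ Finset.range n, (-ν + (n : ℂ) - (j : ℂ))
      = (-1) * ((ν - 1) - ((n - 1 - j : ℕ) : ℂ)) := by
    intro j hj
    rw [Finset.mem_range] at hj
    rw [Nat.cast_sub (by omega), Nat.cast_sub (by omega)]
    push_cast
    ring
  rw [Finset.prod_congr rfl h1, Finset.prod_mul_distrib, Finset.prod_const,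
    Finset.card_range, Finset.prod_range_reflect (fun j => (ν - 1) - (j : ℂ)) n]

lemma binomC_neg_one_add {n : ℕ} (hn : n ≠ 0) : binomC (-1 + (n : ℂ)) n = 0 := by
  rw [binomC]
  rw [Finset.prod_eq_zero (i := n - 1) (Finset.mem_range.mpr (by omega)) (by
    rw [Nat.cast_sub (by omega)]
    push_cast; ring)]
  simp

open Finset MvPowerSeries

section Aux
variable {σ : Type*}

/-- total degree of a multi-index -/
def mdeg (N : σ →₀ ℕ) : ℕ := N.sum fun _ e => e

lemma mdeg_add (a b : σ →₀ ℕ) : mdeg (a + b) = mdeg a + mdeg b :=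
  Finsupp.sum_add_index' (fun _ => rfl) (fun _ _ _ => rfl)

lemma mdeg_eq_zero_iff {N : σ →₀ ℕ} : mdeg N = 0 ↔ N = 0 := by
  constructor
  · intro h
    ext i
    by_cases hi : i ∈ N.support
    · have := (Finset.sum_eq_zero_iff.mp h) i hi
      simpa using this
    · simpa using Finsupp.notMem_support_iff.mp hi
  · intro h; simp [h, mdeg, Finsupp.sum_zero_index]

lemma apply_le_mdeg (N : σ →₀ ℕ) (i : σ) : N i ≤ mdeg N := by
  by_cases hi : i ∈ N.support
  · exact Finset.single_le_sum (f := fun j => N j) (fun _ _ => Nat.zero_le _) hi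
  · simp [Finsupp.notMem_support_iff.mp hi]

lemma coeff_pow_eq_zero {g : MvPowerSeries σ ℂ} (hg : MvPowerSeries.constantCoeff g = 0)
    {k : ℕ} {N : σ →₀ ℕ} (h : mdeg N < k) : MvPowerSeries.coeff N (g ^ k) = 0 := by
  classical
  induction k generalizing N with
  | zero => omega
  | succ k ih =>
      rw [pow_succ, MvPowerSeries.coeff_mul]
      refine Finset.sum_eq_zero fun p hp => ?_
      rw [Finset.HasAntidiagonal.mem_antidiagonal] at hp
      by_cases hA : p.2 = 0
      · rw [hA, MvPowerSeries.coeff_zero_eq_constantCoeff_apply, hg, mul_zero]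
      · have h2 : 1 ≤ mdeg p.2 := by
          rcases Nat.eq_zero_or_pos (mdeg p.2) with h0 | h0
          · exact absurd (mdeg_eq_zero_iff.mp h0) hA
          · exact h0
        have : mdeg p.1 + mdeg p.2 = mdeg N := by rw [← mdeg_add, hp]
        rw [ih (by omega), zero_mul]

lemma coeff_cpow (f : MvPowerSeries σ ℂ) (α : ℂ) (N : σ →₀ ℕ) :
    MvPowerSeries.coeff N (cpow f α)
      = ∑ k ∈ Finset.range (mdeg N + 1), binomC α k * MvPowerSeries.coeff N ((f - 1) ^ k) := rfl

lemma constantCoeff_sub_one {f : MvPowerSeries σ ℂ}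
    (hf : MvPowerSeries.constantCoeff f = 1) :
    MvPowerSeries.constantCoeff (f - 1) = 0 := by
  rw [map_sub, hf, map_one, sub_self]

lemma coeff_cpow_of_lt {f : MvPowerSeries σ ℂ}
    (hf : MvPowerSeries.constantCoeff f = 1) (α : ℂ) (N : σ →₀ ℕ) {M : ℕ}
    (hM : mdeg N < M) :
    MvPowerSeries.coeff N (cpow f α)
      = ∑ k ∈ Finset.range M, binomC α k * MvPowerSeries.coeff N ((f - 1) ^ k) := by
  rw [coeff_cpow]
  refine Finset.sum_subset (Finset.range_subset_range.mpr (by omega)) fun k _ hk => ?_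
  rw [coeff_pow_eq_zero (constantCoeff_sub_one hf) (by simp at hk ⊢; omega), mul_zero]

lemma cpow_zero (f : MvPowerSeries σ ℂ) : cpow f 0 = 1 := by
  ext N
  rw [coeff_cpow]
  rw [Finset.sum_eq_single 0 (fun k _ hk => by rw [binomC_zero_left hk, zero_mul])
    (fun h => absurd (Finset.mem_range.mpr (by omega)) h)]
  rw [binomC_zero_right, one_mul, pow_zero]

lemma coeff_cpow_mul {f : MvPowerSeries σ ℂ} (B : MvPowerSeries σ ℂ)
    (hf : MvPowerSeries.constantCoeff f = 1) (α : ℂ) (N : σ →₀ ℕ) :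
    MvPowerSeries.coeff N (cpow f α * B)
      = ∑ m ∈ Finset.range (mdeg N + 1),
          binomC α m * MvPowerSeries.coeff N ((f - 1) ^ m * B) := by
  classical
  rw [MvPowerSeries.coeff_mul]
  have hcong : ∀ p ∈ Finset.HasAntidiagonal.antidiagonal N,
      MvPowerSeries.coeff p.1 (cpow f α) * MvPowerSeries.coeff p.2 B
        = ∑ m ∈ Finset.range (mdeg N + 1),
            binomC α m * (MvPowerSeries.coeff p.1 ((f - 1) ^ m)
              * MvPowerSeries.coeff p.2 B) := by
    intro p hp
    rw [Finset.HasAntidiagonal.mem_antidiagonal] at hp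
    have hple : mdeg p.1 ≤ mdeg N := by
      rw [← hp, mdeg_add]; omega
    rw [coeff_cpow_of_lt hf α p.1 (show mdeg p.1 < mdeg N + 1 by omega), Finset.sum_mul]
    simp [mul_assoc]
  rw [Finset.sum_congr rfl hcong, Finset.sum_comm]
  refine Finset.sum_congr rfl fun m _ => ?_
  rw [MvPowerSeries.coeff_mul, Finset.mul_sum]

lemma sum_range_antidiagonal_eq {M : ℕ} (F : ℕ → ℕ → ℂ) (hF : ∀ i j, M ≤ i + j → F i j = 0) :
    ∑ n ∈ Finset.range M, ∑ p ∈ Finset.HasAntidiagonal.antidiagonal n, F p.1 p.2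
      = ∑ i ∈ Finset.range M, ∑ j ∈ Finset.range M, F i j := by
  classical
  have hdisj : (↑(Finset.range M) : Set ℕ).PairwiseDisjoint
      (fun n => (Finset.HasAntidiagonal.antidiagonal n : Finset (ℕ × ℕ))) := by
    intro a _ b _ hab
    simp only [Function.onFun]
    rw [Finset.disjoint_left]
    intro p hpa hpb
    rw [Finset.HasAntidiagonal.mem_antidiagonal] at hpa hpb
    exact hab (hpa ▸ hpb)
  rw [← Finset.sum_biUnion hdisj, ← Finset.sum_product']
  refine Finset.sum_subset ?_ ?_
  · intro p hp
    rw [Finset.mem_biUnion] at hp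
    obtain ⟨n, hn, hpn⟩ := hp
    rw [Finset.HasAntidiagonal.mem_antidiagonal] at hpn
    rw [Finset.mem_range] at hn
    rw [Finset.mem_product, Finset.mem_range, Finset.mem_range]
    omega
  · intro p hp hp2
    refine hF p.1 p.2 ?_
    by_contra hc
    exact hp2 (Finset.mem_biUnion.mpr ⟨p.1 + p.2, Finset.mem_range.mpr (by omega),
      Finset.HasAntidiagonal.mem_antidiagonal.mpr rfl⟩)

lemma cpow_add {f : MvPowerSeries σ ℂ} (hf : MvPowerSeries.constantCoeff f = 1)
    (α β : ℂ) : cpow f (α + β) = cpow f α * cpow f β := by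
  ext N
  rw [coeff_cpow_mul (cpow f β) hf α N]
  have h2 : ∀ m, MvPowerSeries.coeff N ((f - 1) ^ m * cpow f β)
      = ∑ k ∈ Finset.range (mdeg N + 1),
          binomC β k * MvPowerSeries.coeff N ((f - 1) ^ (m + k)) := by
    intro m
    rw [mul_comm, coeff_cpow_mul ((f - 1) ^ m) hf β N]
    refine Finset.sum_congr rfl fun k _ => ?_
    rw [← pow_add, add_comm k m]
  rw [coeff_cpow]
  calc ∑ n ∈ Finset.range (mdeg N + 1),
        binomC (α + β) n * MvPowerSeries.coeff N ((f - 1) ^ n)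
      = ∑ n ∈ Finset.range (mdeg N + 1), ∑ p ∈ Finset.HasAntidiagonal.antidiagonal n,
          binomC α p.1 * binomC β p.2 * MvPowerSeries.coeff N ((f - 1) ^ (p.1 + p.2)) := by
        refine Finset.sum_congr rfl fun n _ => ?_
        rw [binomC_vandermonde, Finset.sum_mul]
        refine Finset.sum_congr rfl fun p hp => ?_
        rw [Finset.HasAntidiagonal.mem_antidiagonal] at hp
        rw [hp]
    _ = ∑ m ∈ Finset.range (mdeg N + 1), ∑ k ∈ Finset.range (mdeg N + 1),
          binomC α m * binomC β k * MvPowerSeries.coeff N ((f - 1) ^ (m + k)) := by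
        refine sum_range_antidiagonal_eq
          (fun i j => binomC α i * binomC β j * MvPowerSeries.coeff N ((f - 1) ^ (i + j)))
          (fun i j hij => ?_)
        show binomC α i * binomC β j * MvPowerSeries.coeff N ((f - 1) ^ (i + j)) = 0
        rw [coeff_pow_eq_zero (constantCoeff_sub_one hf) (by omega), mul_zero]
    _ = ∑ m ∈ Finset.range (mdeg N + 1),
          binomC α m * MvPowerSeries.coeff N ((f - 1) ^ m * cpow f β) := by
        refine Finset.sum_congr rfl fun m _ => ?_
        rw [h2 m, Finset.mul_sum]
        refine Finset.sum_congr rfl fun k _ => ?_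
        ring

lemma cpow_nat_mul {f : MvPowerSeries σ ℂ} (hf : MvPowerSeries.constantCoeff f = 1)
    (m : ℕ) (α : ℂ) : cpow f α ^ m = cpow f (m * α) := by
  induction m with
  | zero => simp [cpow_zero]
  | succ m ih =>
      rw [pow_succ, ih, show ((m + 1 : ℕ) : ℂ) * α = (m : ℂ) * α + α from by push_cast; ring,
        cpow_add hf]

end Aux

section Main
variable {H : Type*} [Fintype H] [LinearOrder H]

lemma Kfin_apply (G : Matrix H H ℂ) (ν : H → ℂ) (N : H →₀ ℕ) :
    Kfin 1 G ν N = ∏ i ∈ N.support, binomC (Pfin 1 G ν N i + (N i : ℂ)) (N i) := rfl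

lemma Pfin_one (G : Matrix H H ℂ) (ν : H → ℂ) (N : H →₀ ℕ) (i : H) :
    Pfin 1 G ν N i = -(ν i) - ∑ j, (N j : ℂ) * G j i := by
  simp [Pfin, inv_one, Matrix.mul_one, Matrix.one_apply]

lemma sum_mul_G_eq_zero (G : Matrix H H ℂ) (hG : ∀ i j : H, i ≤ j → G i j = 0)
    (N : H →₀ ℕ) (j : H) (h : ∀ k, N k ≠ 0 → k ≤ j) :
    (∑ k, (N k : ℂ) * G k j) = 0 := by
  refine Finset.sum_eq_zero fun k _ => ?_
  by_cases hk : N k = 0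
  · simp [hk]
  · rw [hG k j (h k hk), mul_zero]

lemma Kfin_apply_eq_zero (G : Matrix H H ℂ) (hG : ∀ i j : H, i ≤ j → G i j = 0)
    (ν : H → ℂ) (N : H →₀ ℕ) (j1 : H) (hj1 : j1 ∈ N.support)
    (hmax : ∀ k ∈ N.support, k ≤ j1) (h1 : ν j1 = 1) :
    Kfin 1 G ν N = 0 := by
  rw [Kfin_apply]
  refine Finset.prod_eq_zero hj1 ?_
  rw [Pfin_one, sum_mul_G_eq_zero G hG N j1
    (fun k hk => hmax k (Finsupp.mem_support_iff.mpr hk)), sub_zero, h1]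
  exact binomC_neg_one_add (Finsupp.mem_support_iff.mp hj1)

/-- the shifted exponent family -/
noncomputable def nuStep (G : Matrix H H ℂ) (ν : H → ℂ) (i0 : H) (m : ℕ) : H → ℂ :=
  fun i => if i = i0 then 1 else ν i + (m : ℂ) * G i0 i

lemma sum_sub_single (G : Matrix H H ℂ) (N : H →₀ ℕ) (i0 : H) {m : ℕ} (hm : m ≤ N i0) (j : H) :
    (∑ k, ((N - Finsupp.single i0 m) k : ℂ) * G k j)
      = (∑ k, (N k : ℂ) * G k j) - (m : ℂ) * G i0 j := by
  have hk : ∀ k, ((N - Finsupp.single i0 m) k : ℂ) * G k j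
      = (N k : ℂ) * G k j - (if k = i0 then (m : ℂ) * G i0 j else 0) := by
    intro k
    rw [Finsupp.tsub_apply]
    by_cases hki : k = i0
    · subst hki
      rw [Finsupp.single_eq_same, if_pos rfl, Nat.cast_sub hm]
      ring
    · rw [Finsupp.single_eq_of_ne hki, if_neg hki, tsub_zero, sub_zero]
  rw [Finset.sum_congr rfl (fun k _ => hk k), Finset.sum_sub_distrib,
    Finset.sum_ite_eq' Finset.univ i0 (fun _ => (m : ℂ) * G i0 j), if_pos (Finset.mem_univ i0)]

lemma key_sum (G : Matrix H H ℂ) (hG : ∀ i j : H, i ≤ j → G i j = 0) (ν : H → ℂ) (i0 : H)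
    (hν1 : ∀ j, i0 < j → ν j = 1) (N : H →₀ ℕ) :
    ∑ m ∈ Finset.range (mdeg N + 1), binomC (ν i0 - 1) m * ((-1 : ℂ) ^ m *
      (if Finsupp.single i0 m ≤ N then Kfin 1 G (nuStep G ν i0 m) (N - Finsupp.single i0 m)
        else 0))
    = Kfin 1 G ν N := by
  classical
  by_cases hA : ∀ j, i0 < j → N j = 0
  · -- Case B : nothing above i0
    have hmem : N i0 ∈ Finset.range (mdeg N + 1) :=
      Finset.mem_range.mpr (by have := apply_le_mdeg N i0; omega)
    rw [Finset.sum_eq_single_of_mem (N i0) hmem ?_]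
    · -- main term
      rw [if_pos (Finsupp.single_le_iff.mpr le_rfl)]
      set M0 := N i0 with hM0
      set N' := N - Finsupp.single i0 M0 with hN'
      have hN'i0 : N' i0 = 0 := by
        rw [hN', Finsupp.tsub_apply, Finsupp.single_eq_same]; omega
      have hN'ne : ∀ j, j ≠ i0 → N' j = N j := fun j hj => by
        rw [hN', Finsupp.tsub_apply, Finsupp.single_eq_of_ne hj, tsub_zero]
      have hsupp : N'.support = N.support.erase i0 := by
        ext k
        by_cases hk : k = i0
        · subst hk; simp [Finsupp.mem_support_iff, hN'i0]
        · simp [Finsupp.mem_support_iff, hN'ne k hk, hk]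
      have hPfin : ∀ j ∈ N.support.erase i0,
          Pfin 1 G (nuStep G ν i0 M0) N' j = Pfin 1 G ν N j := by
        intro j hj
        obtain ⟨hjne, _⟩ := Finset.mem_erase.mp hj
        rw [Pfin_one, Pfin_one, hN', sum_sub_single G N i0 le_rfl j,
          show nuStep G ν i0 M0 j = ν j + (M0 : ℂ) * G i0 j from if_neg hjne]
        ring
      have hPi0 : Pfin 1 G ν N i0 = -(ν i0) := by
        rw [Pfin_one, sum_mul_G_eq_zero G hG N i0 (fun k hk => ?_), sub_zero]
        by_contra hki
        exact hk (hA k (lt_of_not_ge hki))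
      have hsplit : Kfin 1 G ν N = binomC (Pfin 1 G ν N i0 + (M0 : ℂ)) M0 *
          ∏ i ∈ N.support.erase i0, binomC (Pfin 1 G ν N i + (N i : ℂ)) (N i) := by
        by_cases h0 : M0 = 0
        · rw [Kfin_apply, h0, binomC_zero_right,
            Finset.erase_eq_of_notMem (fun hmem0 => (Finsupp.mem_support_iff.mp hmem0) h0),
            one_mul]
        · rw [Kfin_apply, ← Finset.mul_prod_erase N.support _
            (Finsupp.mem_support_iff.mpr h0)]
      rw [hsplit, hPi0, binomC_reflect (ν i0) M0, Kfin_apply, hsupp,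
        Finset.prod_congr rfl (fun j hj => by
          rw [hPfin j hj, hN'ne j (Finset.mem_erase.mp hj).1])]
      ring
    · -- other terms vanish
      intro m hm hne
      by_cases hle : Finsupp.single i0 m ≤ N
      swap
      · rw [if_neg hle, mul_zero, mul_zero]
      have hmlt : m < N i0 := lt_of_le_of_ne (Finsupp.single_le_iff.mp hle) hne
      set N' := N - Finsupp.single i0 m with hN'
      have hN'i0 : N' i0 = N i0 - m := by
        rw [hN', Finsupp.tsub_apply, Finsupp.single_eq_same]
      have hi0supp : i0 ∈ N'.support := Finsupp.mem_support_iff.mpr (by omega)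
      have hzero : Kfin 1 G (nuStep G ν i0 m) N' = 0 := by
        rw [Kfin_apply]
        refine Finset.prod_eq_zero hi0supp ?_
        have hsum0 : (∑ k, (N' k : ℂ) * G k i0) = 0 := by
          refine sum_mul_G_eq_zero G hG N' i0 (fun k hk => ?_)
          by_contra hki
          have hNk : N k = 0 := hA k (lt_of_not_ge hki)
          have : N' k ≤ N k := by rw [hN', Finsupp.tsub_apply]; exact Nat.sub_le _ _
          omega
        rw [Pfin_one, hsum0, sub_zero, show nuStep G ν i0 m i0 = 1 from if_pos rfl]
        exact binomC_neg_one_add (by omega)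
      rw [if_pos hle, hzero, mul_zero, mul_zero]
  · -- Case A : something above i0
    push_neg at hA
    obtain ⟨j', hj'lt, hj'ne⟩ := hA
    have hne : N.support.Nonempty := ⟨j', Finsupp.mem_support_iff.mpr hj'ne⟩
    set j1 := N.support.max' hne with hj1
    have hj1mem : j1 ∈ N.support := N.support.max'_mem hne
    have hmax : ∀ k ∈ N.support, k ≤ j1 := fun k hk => Finset.le_max' _ k hk
    have hi0j1 : i0 < j1 :=
      lt_of_lt_of_le hj'lt (hmax j' (Finsupp.mem_support_iff.mpr hj'ne))
    rw [Kfin_apply_eq_zero G hG ν N j1 hj1mem hmax (hν1 j1 hi0j1)]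
    refine Finset.sum_eq_zero fun m _ => ?_
    by_cases hle : Finsupp.single i0 m ≤ N
    · rw [if_pos hle]
      set N' := N - Finsupp.single i0 m with hN'
      have hj1i0 : j1 ≠ i0 := ne_of_gt hi0j1
      have hN'j1 : N' j1 = N j1 := by
        rw [hN', Finsupp.tsub_apply, Finsupp.single_eq_of_ne hj1i0, tsub_zero]
      have hj1mem' : j1 ∈ N'.support := by
        rw [Finsupp.mem_support_iff, hN'j1]
        exact Finsupp.mem_support_iff.mp hj1mem
      have hmax' : ∀ k ∈ N'.support, k ≤ j1 := by
        intro k hk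
        refine hmax k (Finsupp.mem_support_iff.mpr ?_)
        have h1 : N' k ≤ N k := by rw [hN', Finsupp.tsub_apply]; exact Nat.sub_le _ _
        have h2 := Finsupp.mem_support_iff.mp hk
        omega
      have hν' : nuStep G ν i0 m j1 = 1 := by
        rw [show nuStep G ν i0 m j1 = ν j1 + (m : ℂ) * G i0 j1 from if_neg hj1i0,
          hν1 j1 hi0j1, hG i0 j1 (le_of_lt hi0j1), mul_zero, add_zero]
      rw [Kfin_apply_eq_zero G hG _ N' j1 hj1mem' hmax' hν', mul_zero, mul_zero]
    · rw [if_neg hle, mul_zero, mul_zero]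

end Main

section Final
variable {H : Type*} [Fintype H] [LinearOrder H]

lemma Kfin_eq_one (G : Matrix H H ℂ) (hG : ∀ i j : H, i ≤ j → G i j = 0)
    (ν : H → ℂ) (hν : ∀ j, ν j = 1) : Kfin 1 G ν = 1 := by
  ext N
  by_cases hN : N = 0
  · subst hN
    rw [show (MvPowerSeries.coeff 0) (Kfin 1 G ν) = Kfin 1 G ν 0 from rfl, Kfin_apply]
    simp [MvPowerSeries.coeff_one]
  · have hne : N.support.Nonempty := Finsupp.support_nonempty_iff.mpr hN
    rw [show (MvPowerSeries.coeff N) (Kfin 1 G ν) = Kfin 1 G ν N from rfl,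
      Kfin_apply_eq_zero G hG ν N (N.support.max' hne) (N.support.max'_mem hne)
        (fun k hk => Finset.le_max' _ k hk) (hν _),
      MvPowerSeries.coeff_one, if_neg hN]

lemma claim_aux (G : Matrix H H ℂ) (hG : ∀ i j : H, i ≤ j → G i j = 0)
    (v : H → MvPowerSeries H ℂ)
    (hv0 : ∀ i, MvPowerSeries.constantCoeff (v i) = 0)
    (hv : ∀ i, v i = MvPowerSeries.X i * ∏ j, cpow (1 - v j) (G i j)) :
    ∀ (n : ℕ) (ν : H → ℂ),
      (∀ j : H, n ≤ (((Fintype.orderIsoFinOfCardEq H rfl).symm j : Fin (Fintype.card H)) : ℕ)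
        → ν j = 1) →
      (∏ i, cpow (1 - v i) (ν i - 1)) = Kfin 1 G ν := by
  have hone : ∀ i : H, MvPowerSeries.constantCoeff (1 - v i) = 1 := by
    intro i; rw [map_sub, map_one, hv0 i, sub_zero]
  intro n
  induction n with
  | zero =>
      intro ν hν
      have hν1 : ∀ j, ν j = 1 := fun j => hν j (Nat.zero_le _)
      rw [Kfin_eq_one G hG ν hν1]
      refine Finset.prod_eq_one fun i _ => ?_
      rw [hν1 i, sub_self, cpow_zero]
  | succ n IH =>
      intro ν hν
      by_cases hn : n < Fintype.card H
      swap
      · refine IH ν fun j hj => hν j ?_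
        have := ((Fintype.orderIsoFinOfCardEq H rfl).symm j).2
        omega
      · set e := Fintype.orderIsoFinOfCardEq H rfl with he
        set i0 := e ⟨n, hn⟩ with hi0
        have hsymm : e.symm i0 = ⟨n, hn⟩ := by rw [hi0, OrderIso.symm_apply_apply]
        have hrank : ∀ j : H, i0 < j → n < ((e.symm j : Fin (Fintype.card H)) : ℕ) := by
          intro j hj
          have h2 : e.symm i0 < e.symm j := e.symm.lt_iff_lt.mpr hj
          rw [hsymm] at h2
          exact h2
        have hν1 : ∀ j, i0 < j → ν j = 1 := fun j hj => hν j (hrank j hj)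
        have hIHm : ∀ m : ℕ,
            (∏ i, cpow (1 - v i) (nuStep G ν i0 m i - 1)) = Kfin 1 G (nuStep G ν i0 m) := by
          intro m
          refine IH _ fun j hj => ?_
          by_cases hji : j = i0
          · rw [hji]; exact if_pos rfl
          · have hnj : n < ((e.symm j : Fin (Fintype.card H)) : ℕ) := by
              rcases lt_or_eq_of_le hj with h | h
              · omega
              · exfalso
                apply hji
                have : e.symm j = ⟨n, hn⟩ := Fin.ext h.symm
                rw [← hsymm] at this
                exact e.symm.injective this
            have hij : i0 < j := by
              have h2 : e.symm i0 < e.symm j := by rw [hsymm]; exact Fin.mk_lt_of_lt_val hnj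
              exact e.symm.lt_iff_lt.mp h2
            show nuStep G ν i0 m j = 1
            rw [show nuStep G ν i0 m j = ν j + (m : ℂ) * G i0 j from if_neg hji,
              hν j hnj, hG i0 j (le_of_lt hij), mul_zero, add_zero]
        set B := ∏ i ∈ Finset.univ.erase i0, cpow (1 - v i) (ν i - 1) with hB
        have hsplitprod : (∏ i, cpow (1 - v i) (ν i - 1)) = cpow (1 - v i0) (ν i0 - 1) * B :=
          (Finset.mul_prod_erase Finset.univ _ (Finset.mem_univ i0)).symm
        have hprod : ∀ m : ℕ,
            (∏ j, cpow (1 - v j) ((m : ℂ) * G i0 j)) * B = Kfin 1 G (nuStep G ν i0 m) := by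
          intro m
          rw [← hIHm m,
            ← Finset.mul_prod_erase Finset.univ
              (fun i => cpow (1 - v i) (nuStep G ν i0 m i - 1)) (Finset.mem_univ i0),
            show nuStep G ν i0 m i0 - 1 = 0 by simp [nuStep],
            cpow_zero, one_mul,
            ← Finset.mul_prod_erase Finset.univ
              (fun j => cpow (1 - v j) ((m : ℂ) * G i0 j)) (Finset.mem_univ i0),
            hG i0 i0 le_rfl, mul_zero, cpow_zero, one_mul, hB, ← Finset.prod_mul_distrib]
          refine Finset.prod_congr rfl fun i hi => ?_
          have hii0 : i ≠ i0 := (Finset.mem_erase.mp hi).1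
          rw [show nuStep G ν i0 m i - 1 = (m : ℂ) * G i0 i + (ν i - 1) by
            simp only [nuStep, if_neg hii0]; ring]
          exact (cpow_add (hone i) _ _).symm
        have hterm : ∀ m : ℕ, ((1 - v i0) - 1) ^ m * B
            = ((-1 : ℂ) ^ m) • (MvPowerSeries.X i0 ^ m * Kfin 1 G (nuStep G ν i0 m)) := by
          intro m
          rw [show ((1 - v i0) - 1 : MvPowerSeries H ℂ) = -(v i0) by ring,
            ← neg_one_smul ℂ (v i0), smul_pow, smul_mul_assoc]
          congr 1
          rw [hv i0, mul_pow, mul_assoc, ← Finset.prod_pow,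
            Finset.prod_congr rfl (fun j _ => cpow_nat_mul (hone j) m (G i0 j)), hprod m]
        rw [hsplitprod]
        ext N
        rw [coeff_cpow_mul B (hone i0) (ν i0 - 1) N,
          show (MvPowerSeries.coeff N) (Kfin 1 G ν) = Kfin 1 G ν N from rfl,
          ← key_sum G hG ν i0 hν1 N]
        refine Finset.sum_congr rfl fun m _ => ?_
        rw [hterm m, LinearMap.map_smul, smul_eq_mul, MvPowerSeries.X_pow_eq,
          MvPowerSeries.coeff_monomial_mul]
        simp only [one_mul]
        rfl

end Final

/-- If `G` is strictly lower-triangular with respect to a total order on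
`H` (`G_{ij} = 0` for `i ⪯ j`), and `(v_i)` is the unique family with zero constant terms
satisfying `v_i = w_i ∏_j (1-v_j)^{G_{ij}}`, then
`∏_i (1-v_i)^{ν_i - 1} = K^ν_{I,G}(w)`. -/
theorem statement9 {H : Type*} [Fintype H] [LinearOrder H]
    (G : Matrix H H ℂ) (hG : ∀ i j : H, i ≤ j → G i j = 0)
    (v : H → MvPowerSeries H ℂ)
    (hv0 : ∀ i, MvPowerSeries.constantCoeff (v i) = 0)
    (hv : ∀ i, v i = MvPowerSeries.X i * ∏ j, cpow (1 - v j) (G i j))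
    (ν : H → ℂ) :
    (∏ i, cpow (1 - v i) (ν i - 1)) = Kfin 1 G ν := by
  apply claim_aux G hG v hv0 hv (Fintype.card H)
  intro j hj
  exfalso
  have := ((Fintype.orderIsoFinOfCardEq H rfl).symm j).2
  omega
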